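/- Let n ≥ 2k and let P be a k×k permutation matrix. Then m(n,P) ≥ n² − k(k−1), with equality if and only if P is the identity matrix I_k or the anti-diagonal (Hankel) identity matrix H_k. -/

import Mathlib

open Finset

/-- Number of 1-entries of a (0,1)-matrix. -/
def onesCount {m n : ℕ} (A : Fin m → Fin n → Bool) : ℕ :=
  (Finset.univ.filter (fun p : Fin m × Fin n => A p.1 p.2 = true)).card

/-- Number of 0-entries of a (0,1)-matrix. -/
def zerosCount {m n : ℕ} (A : Fin m → Fin n → Bool) : ℕ :=
  (Finset.univ.filter (fun p : Fin m × Fin n => A p.1 p.2 = false)).card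

/-- `A` is `Q`-forcing: every s×t submatrix of `A` is entrywise ≥ Q. -/
def IsForcing {m n s t : ℕ} (A : Fin m → Fin n → Bool) (Q : Fin s → Fin t → Bool) : Prop :=
  ∀ (r : Fin s → Fin m) (c : Fin t → Fin n), StrictMono r → StrictMono c →
    ∀ y x, Q y x = true → A (r y) (c x) = true

/-- Minimum number of 1-entries of an m×n Q-forcing matrix. -/
noncomputable def mMin (m n : ℕ) {s t : ℕ} (Q : Fin s → Fin t → Bool) : ℕ :=
  sInf {v | ∃ A : Fin m → Fin n → Bool, IsForcing A Q ∧ onesCount A = v}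

/-- `A` is strongly `Q`-forcing: every 1-entry lies in a submatrix exactly equal to `Q`. -/
def IsStronglyForcing {m n s t : ℕ} (A : Fin m → Fin n → Bool)
    (Q : Fin s → Fin t → Bool) : Prop :=
  ∀ i j, A i j = true → ∃ (r : Fin s → Fin m) (c : Fin t → Fin n),
    StrictMono r ∧ StrictMono c ∧ (∀ y x, A (r y) (c x) = Q y x) ∧
    ∃ y x, r y = i ∧ c x = j

/-- Maximum number of 1-entries of an m×n strongly Q-forcing matrix. -/
noncomputable def MMax (m n : ℕ) {s t : ℕ} (Q : Fin s → Fin t → Bool) : ℕ :=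
  sSup {v | ∃ A : Fin m → Fin n → Bool, IsStronglyForcing A Q ∧ onesCount A = v}

/-- Corner sets of 0-positions with no 1-entry weakly in the given quadrant direction. -/
def cornerNW {s t : ℕ} (Q : Fin s → Fin t → Bool) : Finset (Fin s × Fin t) :=
  Finset.univ.filter (fun p => ∀ i' j', i' ≤ p.1 → j' ≤ p.2 → Q i' j' = false)

def cornerNE {s t : ℕ} (Q : Fin s → Fin t → Bool) : Finset (Fin s × Fin t) :=
  Finset.univ.filter (fun p => ∀ i' j', i' ≤ p.1 → p.2 ≤ j' → Q i' j' = false)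

def cornerSW {s t : ℕ} (Q : Fin s → Fin t → Bool) : Finset (Fin s × Fin t) :=
  Finset.univ.filter (fun p => ∀ i' j', p.1 ≤ i' → j' ≤ p.2 → Q i' j' = false)

def cornerSE {s t : ℕ} (Q : Fin s → Fin t → Bool) : Finset (Fin s × Fin t) :=
  Finset.univ.filter (fun p => ∀ i' j', p.1 ≤ i' → p.2 ≤ j' → Q i' j' = false)

/-- `P` is a permutation matrix. -/
def IsPermMatrix {k : ℕ} (P : Fin k → Fin k → Bool) : Prop :=
  ∃ σ : Equiv.Perm (Fin k), ∀ i j, P i j = decide (σ i = j)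


/-! ### Auxiliary machinery -/

/-- The window predicate: entry (i,j) must be 1 in any σ-forcing matrix. -/
def Wpred (n k : ℕ) (σ : Equiv.Perm (Fin k)) (i j : ℕ) : Prop :=
  ∃ y : Fin k, (y : ℕ) ≤ i ∧ i + k ≤ n + y ∧ ((σ y : Fin k) : ℕ) ≤ j ∧ j + k ≤ n + (σ y : ℕ)

instance (n k : ℕ) (σ : Equiv.Perm (Fin k)) (i j : ℕ) : Decidable (Wpred n k σ i j) := by
  unfold Wpred; infer_instance

/-- The optimal forcing matrix. -/
def Aopt (n k : ℕ) (σ : Equiv.Perm (Fin k)) : Fin n → Fin n → Bool :=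
  fun i j => decide (Wpred n k σ i j)

lemma sm_le {a b : ℕ} {f : Fin a → Fin b} (hf : StrictMono f) (i : Fin a) : (i : ℕ) ≤ f i := by
  have key : ∀ t : ℕ, ∀ i : Fin a, i.val = t → t ≤ (f i).val := by
    intro t
    induction t with
    | zero => intro i _; exact Nat.zero_le _
    | succ s ih =>
      intro i hi
      have hs : s < a := by omega
      have hlt : (⟨s, hs⟩ : Fin a) < i := by simp [Fin.lt_def, hi]
      have h2 := hf hlt
      have h3 := ih ⟨s, hs⟩ rfl
      simp only [Fin.lt_def] at h2
      omega
  exact key i.val i rfl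

lemma sm_ub {a b : ℕ} {f : Fin a → Fin b} (hf : StrictMono f) (i : Fin a) :
    (f i : ℕ) + a ≤ b + i := by
  have hg : StrictMono (fun t : Fin a => (f t.rev).rev) := by
    intro x y hxy
    exact Fin.rev_lt_rev.mpr (hf (Fin.rev_lt_rev.mpr hxy))
  have := sm_le hg i.rev
  simp only [Fin.rev_rev, Fin.val_rev] at this
  have h1 := i.isLt
  have h2 := (f i).isLt
  omega

section ForcingChar
variable {n k : ℕ} {σ : Equiv.Perm (Fin k)} {P : Fin k → Fin k → Bool}

lemma aopt_forcing (hPσ : ∀ i j, P i j = decide (σ i = j)) :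
    IsForcing (Aopt n k σ) P := by
  intro r c hr hc y x hQ
  rw [hPσ] at hQ
  have hx : σ y = x := of_decide_eq_true hQ
  subst hx
  refine decide_eq_true ?_
  exact ⟨y, sm_le hr y, sm_ub hr y, sm_le hc (σ y), sm_ub hc (σ y)⟩

lemma forcing_ge (hPσ : ∀ i j, P i j = decide (σ i = j))
    {A : Fin n → Fin n → Bool} (hA : IsForcing A P) (i j : Fin n)
    (h : Aopt n k σ i j = true) : A i j = true := by
  obtain ⟨y, hy1, hy2, hy3, hy4⟩ := of_decide_eq_true h
  have hik := i.isLt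
  have hjk := j.isLt
  have hyk := y.isLt
  have hsk := (σ y).isLt
  set r : Fin k → Fin n := fun t => ⟨(i : ℕ) - y + t, by omega⟩ with hrdef
  set c : Fin k → Fin n := fun t => ⟨(j : ℕ) - (σ y : ℕ) + t, by omega⟩ with hcdef
  have hr : StrictMono r := by
    intro a b hab
    simp only [hrdef, Fin.lt_def] at *
    omega
  have hc : StrictMono c := by
    intro a b hab
    simp only [hcdef, Fin.lt_def] at *
    omega
  have := hA r c hr hc y (σ y) (by rw [hPσ]; exact decide_eq_true rfl)
  have hry : r y = i := by simp only [hrdef]; exact Fin.ext (by simp; omega)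
  have hcy : c (σ y) = j := by simp only [hcdef]; exact Fin.ext (by simp; omega)
  rwa [hry, hcy] at this

lemma ones_le (hPσ : ∀ i j, P i j = decide (σ i = j))
    {A : Fin n → Fin n → Bool} (hA : IsForcing A P) :
    onesCount (Aopt n k σ) ≤ onesCount A := by
  apply Finset.card_le_card
  intro p hp
  simp only [Finset.mem_filter, Finset.mem_univ, true_and] at *
  exact forcing_ge hPσ hA p.1 p.2 hp

lemma mMin_eq (hPσ : ∀ i j, P i j = decide (σ i = j)) :
    mMin n n P = onesCount (Aopt n k σ) := by
  have hmem : onesCount (Aopt n k σ) ∈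
      {v | ∃ A : Fin n → Fin n → Bool, IsForcing A P ∧ onesCount A = v} :=
    ⟨Aopt n k σ, aopt_forcing hPσ, rfl⟩
  refine le_antisymm (Nat.sInf_le hmem) ?_
  obtain ⟨A, hA, hAv⟩ := Nat.sInf_mem (⟨_, hmem⟩ : Set.Nonempty _)
  rw [mMin, ← hAv]
  exact ones_le hPσ hA

end ForcingChar

lemma ones_add_zeros {n : ℕ} (A : Fin n → Fin n → Bool) :
    onesCount A + zerosCount A = n ^ 2 := by
  unfold onesCount zerosCount
  have h2 : (Finset.univ.filter (fun p : Fin n × Fin n => A p.1 p.2 = false)) =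
      (Finset.univ.filter (fun p : Fin n × Fin n => ¬ (A p.1 p.2 = true))) := by
    apply Finset.filter_congr
    intro p _
    simp [Bool.not_eq_true]
  rw [h2, Finset.card_filter_add_card_filter_not]
  simp [sq]

lemma zeros_row_sum {n : ℕ} (A : Fin n → Fin n → Bool) :
    zerosCount A = ∑ i : Fin n, (Finset.univ.filter (fun j : Fin n => A i j = false)).card := by
  unfold zerosCount
  rw [Finset.card_eq_sum_card_fiberwise (f := Prod.fst) (t := Finset.univ)
    (fun x _ => Finset.mem_univ _)]
  refine Finset.sum_congr rfl fun i _ => ?_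
  have himg : ((Finset.univ.filter (fun p : Fin n × Fin n => A p.1 p.2 = false)).filter
      (fun p => p.1 = i)) = (Finset.univ.filter (fun j : Fin n => A i j = false)).image
      (fun j => (i, j)) := by
    ext p
    simp only [Finset.mem_filter, Finset.mem_univ, true_and, Finset.mem_image]
    constructor
    · rintro ⟨h1, h2⟩
      exact ⟨p.2, by subst h2; exact ⟨h1, rfl⟩⟩
    · rintro ⟨j, hj, rfl⟩
      exact ⟨hj, rfl⟩
  rw [himg, Finset.card_image_of_injective]
  intro a b hab
  simpa using congrArg Prod.snd hab

/-- card of an interval inside Fin N -/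
lemma hfin (N a b : ℕ) (hb : b ≤ N) :
    ((Finset.univ : Finset (Fin N)).filter
      (fun j : Fin N => a ≤ (j : ℕ) ∧ (j : ℕ) < b)).card = b - a := by
  have himg : ((Finset.univ : Finset (Fin N)).filter
      (fun j : Fin N => a ≤ (j : ℕ) ∧ (j : ℕ) < b)).image Fin.val = Finset.Ico a b := by
    ext m
    simp only [Finset.mem_image, Finset.mem_filter, Finset.mem_univ, true_and, Finset.mem_Ico]
    constructor
    · rintro ⟨j, hj, rfl⟩; exact hj
    · rintro ⟨h1, h2⟩; exact ⟨⟨m, by omega⟩, ⟨h1, h2⟩, rfl⟩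
  have := Finset.card_image_of_injective
    ((Finset.univ : Finset (Fin N)).filter (fun j : Fin N => a ≤ (j : ℕ) ∧ (j : ℕ) < b))
    (Fin.val_injective (n := N))
  rw [himg] at this
  rw [← this, Nat.card_Ico]

lemma count_split (n k c1 c2 : ℕ) (hk : 1 ≤ k) (hn : 2 * k ≤ n) (h1 : c1 ≤ k) (h2 : c2 ≤ k - 1) :
    ((Finset.univ : Finset (Fin n)).filter
      (fun j : Fin n => (j : ℕ) < c1 ∨ n + c2 < (j : ℕ) + k)).card = c1 + (k - 1 - c2) := by
  have heq : ((Finset.univ : Finset (Fin n)).filter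
      (fun j : Fin n => (j : ℕ) < c1 ∨ n + c2 < (j : ℕ) + k)) =
      ((Finset.univ : Finset (Fin n)).filter (fun j : Fin n => 0 ≤ (j : ℕ) ∧ (j : ℕ) < c1)) ∪
      ((Finset.univ : Finset (Fin n)).filter
        (fun j : Fin n => n + c2 + 1 - k ≤ (j : ℕ) ∧ (j : ℕ) < n)) := by
    ext j
    have := j.isLt
    simp only [Finset.mem_union, Finset.mem_filter, Finset.mem_univ, true_and]
    omega
  rw [heq, Finset.card_union_of_disjoint, hfin n 0 c1 (by omega), hfin n (n + c2 + 1 - k) n le_rfl]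
  · omega
  · rw [Finset.disjoint_filter]
    intro j _ hj
    omega

/-- zeros in row i of the optimal matrix -/
def zrow (n k : ℕ) (σ : Equiv.Perm (Fin k)) (i : Fin n) : ℕ :=
  ((Finset.univ : Finset (Fin n)).filter (fun j : Fin n => ¬ Wpred n k σ i j)).card

/-- row bound -/
def bnd (n k i : ℕ) : ℕ := (i + k - n) + (k - 1 - i)

/-- the set of admissible y's for row i -/
def rowSet (n k : ℕ) (i : Fin n) : Finset (Fin k) :=
  Finset.univ.filter (fun y : Fin k => (y : ℕ) ≤ (i : ℕ) ∧ (i : ℕ) + k ≤ n + y)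

lemma rowSet_mem {n k : ℕ} (i : Fin n) (y : Fin k) :
    y ∈ rowSet n k i ↔ ((i : ℕ) + k - n ≤ (y : ℕ) ∧ (y : ℕ) ≤ min (i : ℕ) (k - 1)) := by
  have h1 := y.isLt
  have h2 := i.isLt
  simp only [rowSet, Finset.mem_filter, Finset.mem_univ, true_and]
  omega

lemma rowSet_card {n k : ℕ} (i : Fin n) (hk : 1 ≤ k) (hn : 2 * k ≤ n) :
    (rowSet n k i).card = min (i : ℕ) (k - 1) + 1 - ((i : ℕ) + k - n) := by
  have h2 := i.isLt
  have : rowSet n k i = (Finset.univ : Finset (Fin k)).filter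
      (fun y : Fin k => (i : ℕ) + k - n ≤ (y : ℕ) ∧ (y : ℕ) < min (i : ℕ) (k - 1) + 1) := by
    ext y
    rw [rowSet_mem]
    simp only [Finset.mem_filter, Finset.mem_univ, true_and]
    omega
  rw [this, hfin k _ _ (by omega)]

lemma rowBound {n k : ℕ} (σ : Equiv.Perm (Fin k)) (i : Fin n) (hk : 1 ≤ k) (hn : 2 * k ≤ n) :
    zrow n k σ i ≤ bnd n k i ∧
    (zrow n k σ i = bnd n k i →
      ∃ m, (rowSet n k i).image (fun y => ((σ y : Fin k) : ℕ)) =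
        Finset.Icc m (m + (min (i : ℕ) (k - 1) - ((i : ℕ) + k - n)))) := by
  have hik := i.isLt
  set a := (i : ℕ) + k - n with ha
  set b := min (i : ℕ) (k - 1) with hb
  have hab : a ≤ b := by omega
  have hbk : b < k := by omega
  have hne : (rowSet n k i).Nonempty :=
    ⟨⟨b, hbk⟩, by rw [rowSet_mem]; simp only [Fin.val_mk]; omega⟩
  set T := (rowSet n k i).image (fun y => ((σ y : Fin k) : ℕ)) with hT
  have hTne : T.Nonempty := hne.image _
  set m := T.min' hTne with hm
  set M := T.max' hTne with hM
  have hmT : m ∈ T := T.min'_mem hTne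
  have hMT : M ∈ T := T.max'_mem hTne
  obtain ⟨ym, hymS, hym⟩ := Finset.mem_image.mp hmT
  obtain ⟨yM, hyMS, hyM⟩ := Finset.mem_image.mp hMT
  have hmM : m ≤ M := T.min'_le _ hMT
  have hMk : M ≤ k - 1 := by
    have := (σ yM).isLt; omega
  have hTcard : T.card = b + 1 - a := by
    rw [hT, Finset.card_image_of_injective _
      (fun x y hxy => σ.injective (Fin.val_injective hxy)), rowSet_card i hk hn]
  have hTsub : T ⊆ Finset.Icc m M := by
    intro x hx
    rw [Finset.mem_Icc]
    exact ⟨T.min'_le _ hx, T.le_max' _ hx⟩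
  have hcard_le : b + 1 - a ≤ M + 1 - m := by
    have := Finset.card_le_card hTsub
    rw [hTcard, Nat.card_Icc] at this
    omega
  have hsub : ((Finset.univ : Finset (Fin n)).filter (fun j : Fin n => ¬ Wpred n k σ i j)) ⊆
      ((Finset.univ : Finset (Fin n)).filter
        (fun j : Fin n => (j : ℕ) < m ∨ n + M < (j : ℕ) + k)) := by
    intro j hj
    simp only [Finset.mem_filter, Finset.mem_univ, true_and] at hj ⊢
    rw [Wpred] at hj
    push_neg at hj
    rw [rowSet_mem] at hymS hyMS
    have h1 := hj ym (by omega) (by omega)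
    have h2 := hj yM (by omega) (by omega)
    rw [hym] at h1
    rw [hyM] at h2
    omega
  have hzle : zrow n k σ i ≤ m + (k - 1 - M) := by
    rw [zrow, ← count_split n k m M hk hn (by omega) hMk]
    exact Finset.card_le_card hsub
  have hble : m + (k - 1 - M) ≤ bnd n k i := by
    rw [bnd]
    omega
  refine ⟨le_trans hzle hble, fun hzeq => ?_⟩
  have h3 : m + (k - 1 - M) = bnd n k i := le_antisymm hble (by omega)
  have hMm : M - m ≤ b - a := by
    rw [bnd] at h3
    omega
  refine ⟨m, ?_⟩
  have heqT : T = Finset.Icc m M := by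
    apply Finset.eq_of_subset_of_card_le hTsub
    rw [Nat.card_Icc, hTcard]
    omega
  show T = _
  rw [heqT]
  congr 1
  omega

lemma sum_bnd {n k : ℕ} (hk : 1 ≤ k) (hn : 2 * k ≤ n) :
    ∑ i : Fin n, bnd n k (i : ℕ) = k * (k - 1) := by
  have hB : ∑ i ∈ Finset.range n, (k - 1 - i) = ∑ i ∈ Finset.range k, i := by
    have hsub : ∑ i ∈ Finset.range n, (k - 1 - i) = ∑ i ∈ Finset.range (k-1), (k - 1 - i) := by
      rw [← Finset.sum_subset (Finset.range_subset_range.mpr (by omega : k - 1 ≤ n))]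
      intro x hx hnx
      simp only [Finset.mem_range] at hx hnx
      omega
    rw [hsub, ← Finset.sum_range_reflect]
    rw [show k = (k-1) + 1 by omega, Finset.sum_range_succ' (fun i => i) (k-1)]
    simp only [add_zero]
    apply Finset.sum_congr rfl
    intro x hx
    simp only [Finset.mem_range] at hx
    omega
  have hA : ∑ i ∈ Finset.range n, (i + k - n) = ∑ i ∈ Finset.range n, (k - 1 - i) := by
    rw [← Finset.sum_range_reflect (fun i => i + k - n) n]
    apply Finset.sum_congr rfl
    intro x hx
    simp only [Finset.mem_range] at hx
    omega
  rw [Fin.sum_univ_eq_sum_range (fun i => bnd n k i) n]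
  unfold bnd
  rw [Finset.sum_add_distrib, hA, hB]
  have := Finset.sum_range_id_mul_two k
  omega

section RowExact
variable {n k : ℕ} {σ : Equiv.Perm (Fin k)}

lemma zrow_exact (hk : 1 ≤ k) (hn : 2 * k ≤ n) (i : Fin n) (c1 c2 : ℕ)
    (h1 : c1 ≤ k) (h2 : c2 ≤ k - 1)
    (hiff : ∀ j : Fin n, ¬ Wpred n k σ i j ↔ ((j : ℕ) < c1 ∨ n + c2 < (j : ℕ) + k)) :
    zrow n k σ i = c1 + (k - 1 - c2) := by
  rw [zrow, ← count_split n k c1 c2 hk hn h1 h2]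
  congr 1
  apply Finset.filter_congr
  intro j _
  first
  | exact hiff j
  | exact propext (hiff j)

/-- exact rows for the identity -/
lemma zrow_id (hk : 1 ≤ k) (hn : 2 * k ≤ n) (hσ : ∀ y : Fin k, σ y = y) (i : Fin n) :
    zrow n k σ i = bnd n k (i : ℕ) := by
  have hik := i.isLt
  set a := (i : ℕ) + k - n with ha
  set b := min (i : ℕ) (k - 1) with hb
  have hval : ∀ y : Fin k, ((σ y : Fin k) : ℕ) = (y : ℕ) := fun y => by rw [hσ]
  have hiff : ∀ j : Fin n, ¬ Wpred n k σ i j ↔ ((j : ℕ) < a ∨ n + b < (j : ℕ) + k) := ?_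
  · have h := zrow_exact hk hn i a b (by omega) (by omega) hiff
    rw [h, bnd]; omega
  intro j
  have hjn := j.isLt
  constructor
  · intro hW
    rw [Wpred] at hW
    push_neg at hW
    have hA := hW ⟨a, by omega⟩ (by simp only [Fin.val_mk]; omega)
      (by simp only [Fin.val_mk]; omega)
    have hB := hW ⟨b, by omega⟩ (by simp only [Fin.val_mk]; omega)
      (by simp only [Fin.val_mk]; omega)
    rw [hval] at hA hB
    simp only [Fin.val_mk] at hA hB
    omega
  · intro hor
    rw [Wpred]
    push_neg
    intro y hy1 hy2
    rw [hval]
    have := y.isLt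
    omega

/-- exact rows for the reversal -/
lemma zrow_rev (hk : 1 ≤ k) (hn : 2 * k ≤ n)
    (hσ : ∀ y : Fin k, ((σ y : Fin k) : ℕ) = k - 1 - (y : ℕ))
    (i : Fin n) : zrow n k σ i = bnd n k (i : ℕ) := by
  have hik := i.isLt
  set a := (i : ℕ) + k - n with ha
  set b := min (i : ℕ) (k - 1) with hb
  have hiff : ∀ j : Fin n, ¬ Wpred n k σ i j ↔
      ((j : ℕ) < k - 1 - b ∨ n + (k - 1 - a) < (j : ℕ) + k) := ?_
  · have h := zrow_exact hk hn i (k - 1 - b) (k - 1 - a) (by omega) (by omega) hiff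
    rw [h, bnd]; omega
  intro j
  have hjn := j.isLt
  constructor
  · intro hW
    rw [Wpred] at hW
    push_neg at hW
    have hA := hW ⟨a, by omega⟩ (by simp only [Fin.val_mk]; omega)
      (by simp only [Fin.val_mk]; omega)
    have hB := hW ⟨b, by omega⟩ (by simp only [Fin.val_mk]; omega)
      (by simp only [Fin.val_mk]; omega)
    rw [hσ] at hA hB
    simp only [Fin.val_mk] at hA hB
    omega
  · intro hor
    rw [Wpred]
    push_neg
    intro y hy1 hy2
    rw [hσ]
    have := y.isLt
    omega

end RowExact

section Determine
variable {n k : ℕ} {σ : Equiv.Perm (Fin k)}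

/-- structure hypothesis coming from the equality case of rowBound -/
def IntervalHyp (n k : ℕ) (σ : Equiv.Perm (Fin k)) : Prop :=
  ∀ i : Fin n, ∃ m, (rowSet n k i).image (fun y => ((σ y : Fin k) : ℕ)) =
    Finset.Icc m (m + (min (i : ℕ) (k - 1) - ((i : ℕ) + k - n)))

/-- prefix version: for t ≤ k-2, the image of {0,...,t} is an interval [m, m+t] -/
lemma prefix_interval (hk : 2 ≤ k) (hn : 2 * k ≤ n) (hI : IntervalHyp n k σ)
    {t : ℕ} (ht : t ≤ k - 2) :
    ∃ m, (Finset.univ.filter (fun y : Fin k => (y : ℕ) ≤ t)).image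
      (fun y => ((σ y : Fin k) : ℕ)) = Finset.Icc m (m + t) := by
  have htn : t < n := by omega
  obtain ⟨m, hm⟩ := hI ⟨t, htn⟩
  refine ⟨m, ?_⟩
  have hset : rowSet n k ⟨t, htn⟩ = Finset.univ.filter (fun y : Fin k => (y : ℕ) ≤ t) := by
    ext y
    rw [rowSet_mem]
    simp only [Finset.mem_filter, Finset.mem_univ, true_and, Fin.val_mk]
    have := y.isLt
    omega
  rw [hset] at hm
  rw [hm]
  congr 1
  simp only [Fin.val_mk]
  omega

lemma sigma_zero (hk : 2 ≤ k) (hn : 2 * k ≤ n) (hI : IntervalHyp n k σ) :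
    ((σ ⟨0, by omega⟩ : Fin k) : ℕ) = 0 ∨ ((σ ⟨0, by omega⟩ : Fin k) : ℕ) = k - 1 := by
  have hin : n - k + 1 < n := by omega
  obtain ⟨m, hm⟩ := hI ⟨n - k + 1, hin⟩
  have hset : rowSet n k ⟨n - k + 1, hin⟩ =
      Finset.univ.filter (fun y : Fin k => 1 ≤ (y : ℕ)) := by
    ext y
    rw [rowSet_mem]
    simp only [Finset.mem_filter, Finset.mem_univ, true_and, Fin.val_mk]
    have := y.isLt
    omega
  rw [hset] at hm
  have hMval : m + (min ((n - k + 1 : ℕ)) (k - 1) - ((n - k + 1) + k - n)) = m + (k - 2) := by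
    omega
  simp only [Fin.val_mk] at hm
  rw [hMval] at hm
  have h0 : ((σ ⟨0, by omega⟩ : Fin k) : ℕ) ∉ Finset.Icc m (m + (k - 2)) := by
    rw [← hm]
    simp only [Finset.mem_image, Finset.mem_filter, Finset.mem_univ, true_and]
    rintro ⟨y, hy1, hy2⟩
    have h3 : σ y = σ ⟨0, by omega⟩ := Fin.ext (by exact_mod_cast hy2)
    have h4 : y = ⟨0, by omega⟩ := σ.injective h3
    rw [h4] at hy1
    simp at hy1
  have hMmem : m + (k - 2) ∈ Finset.Icc m (m + (k - 2)) := by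
    simp
  rw [← hm] at hMmem
  obtain ⟨y, _, hy⟩ := Finset.mem_image.mp hMmem
  have hMle : m + (k - 2) ≤ k - 1 := by
    have := (σ y).isLt
    omega
  have h0lt := (σ (⟨0, by omega⟩ : Fin k)).isLt
  simp only [Finset.mem_Icc] at h0
  omega

/-- from IntervalHyp with σ0 = 0 conclude σ = id -/
lemma sigma_id (hk : 2 ≤ k) (hn : 2 * k ≤ n) (hI : IntervalHyp n k σ)
    (h0 : ((σ ⟨0, by omega⟩ : Fin k) : ℕ) = 0) :
    ∀ y : Fin k, ((σ y : Fin k) : ℕ) = (y : ℕ) := by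
  have key : ∀ t : ℕ, ∀ y : Fin k, (y : ℕ) = t → ((σ y : Fin k) : ℕ) = t := by
    intro t
    induction t using Nat.strong_induction_on with
    | _ t ih =>
      intro y hy
      rcases Nat.lt_or_ge t (k - 1) with hlt | hge
      · obtain ⟨m, hm⟩ := prefix_interval hk hn hI (t := t) (by omega)
        have h0mem : (0 : ℕ) ∈ Finset.Icc m (m + t) := by
          rw [← hm]
          refine Finset.mem_image.mpr ⟨⟨0, by omega⟩, ?_, h0⟩
          simp
        simp only [Finset.mem_Icc] at h0mem
        have hm0 : m = 0 := by omega
        subst hm0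
        have hymem : ((σ y : Fin k) : ℕ) ∈ Finset.Icc 0 (0 + t) := by
          rw [← hm]
          refine Finset.mem_image.mpr ⟨y, ?_, rfl⟩
          simp [hy]
        simp only [Finset.mem_Icc, zero_add] at hymem
        by_contra hne
        have hvlt : ((σ y : Fin k) : ℕ) < t := by omega
        set s := ((σ y : Fin k) : ℕ) with hs
        have hsk : s < k := by omega
        have := ih s hvlt ⟨s, hsk⟩ rfl
        have heq : σ (⟨s, hsk⟩ : Fin k) = σ y := Fin.ext (this.trans hs)
        have := σ.injective heq
        have : ((⟨s, hsk⟩ : Fin k) : ℕ) = (y : ℕ) := congrArg Fin.val this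
        simp only [Fin.val_mk] at this
        omega
      · have hyk := y.isLt
        have ht : t = k - 1 := by omega
        have hvle : ((σ y : Fin k) : ℕ) ≤ k - 1 := by
          have := (σ y).isLt; omega
        by_contra hne
        have hvlt : ((σ y : Fin k) : ℕ) < t := by omega
        set s := ((σ y : Fin k) : ℕ) with hs
        have hsk : s < k := by omega
        have := ih s hvlt ⟨s, hsk⟩ rfl
        have heq : σ (⟨s, hsk⟩ : Fin k) = σ y := Fin.ext (this.trans hs)
        have := σ.injective heq
        have : ((⟨s, hsk⟩ : Fin k) : ℕ) = (y : ℕ) := congrArg Fin.val this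
        simp only [Fin.val_mk] at this
        omega
  intro y
  exact key y.val y rfl

/-- from IntervalHyp with σ0 = k-1 conclude σ = rev -/
lemma sigma_rev (hk : 2 ≤ k) (hn : 2 * k ≤ n) (hI : IntervalHyp n k σ)
    (h0 : ((σ ⟨0, by omega⟩ : Fin k) : ℕ) = k - 1) :
    ∀ y : Fin k, ((σ y : Fin k) : ℕ) = k - 1 - (y : ℕ) := by
  have key : ∀ t : ℕ, ∀ y : Fin k, (y : ℕ) = t → ((σ y : Fin k) : ℕ) = k - 1 - t := by
    intro t
    induction t using Nat.strong_induction_on with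
    | _ t ih =>
      intro y hy
      rcases Nat.lt_or_ge t (k - 1) with hlt | hge
      · obtain ⟨m, hm⟩ := prefix_interval hk hn hI (t := t) (by omega)
        have h0mem : (k - 1 : ℕ) ∈ Finset.Icc m (m + t) := by
          rw [← hm]
          refine Finset.mem_image.mpr ⟨⟨0, by omega⟩, ?_, h0⟩
          simp
        simp only [Finset.mem_Icc] at h0mem
        have hMmem : m + t ∈ Finset.Icc m (m + t) := by simp
        rw [← hm] at hMmem
        obtain ⟨z, _, hz⟩ := Finset.mem_image.mp hMmem
        have hMle : m + t ≤ k - 1 := by have := (σ z).isLt; omega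
        have hmval : m = k - 1 - t := by omega
        subst hmval
        have hymem : ((σ y : Fin k) : ℕ) ∈ Finset.Icc (k - 1 - t) (k - 1 - t + t) := by
          rw [← hm]
          refine Finset.mem_image.mpr ⟨y, ?_, rfl⟩
          simp [hy]
        simp only [Finset.mem_Icc] at hymem
        by_contra hne
        set v := ((σ y : Fin k) : ℕ) with hv
        have hs : k - 1 - v < t := by omega
        have hsk : k - 1 - v < k := by omega
        have := ih (k - 1 - v) hs ⟨k - 1 - v, hsk⟩ rfl
        have hvv : k - 1 - (k - 1 - v) = v := by omega
        rw [hvv] at this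
        have heq : σ (⟨k - 1 - v, hsk⟩ : Fin k) = σ y := Fin.ext (this.trans hv)
        have := σ.injective heq
        have : ((⟨k - 1 - v, hsk⟩ : Fin k) : ℕ) = (y : ℕ) := congrArg Fin.val this
        simp only [Fin.val_mk] at this
        omega
      · have hyk := y.isLt
        have ht : t = k - 1 := by omega
        have hvle : ((σ y : Fin k) : ℕ) ≤ k - 1 := by have := (σ y).isLt; omega
        by_contra hne
        set v := ((σ y : Fin k) : ℕ) with hv
        have hvpos : 1 ≤ v := by omega
        have hs : k - 1 - v < t := by omega
        have hsk : k - 1 - v < k := by omega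
        have := ih (k - 1 - v) hs ⟨k - 1 - v, hsk⟩ rfl
        have hvv : k - 1 - (k - 1 - v) = v := by omega
        rw [hvv] at this
        have heq : σ (⟨k - 1 - v, hsk⟩ : Fin k) = σ y := Fin.ext (this.trans hv)
        have := σ.injective heq
        have : ((⟨k - 1 - v, hsk⟩ : Fin k) : ℕ) = (y : ℕ) := congrArg Fin.val this
        simp only [Fin.val_mk] at this
        omega
  intro y
  exact key y.val y rfl

end Determine

lemma zeros_aopt_sum {n k : ℕ} (σ : Equiv.Perm (Fin k)) :
    zerosCount (Aopt n k σ) = ∑ i : Fin n, zrow n k σ i := by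
  rw [zeros_row_sum]
  refine Finset.sum_congr rfl fun i _ => ?_
  rw [zrow]
  congr 1
  apply Finset.filter_congr
  intro j _
  simp [Aopt]

theorem stmt8 (k n : ℕ) (hk : 1 ≤ k) (hn : 2 * k ≤ n)
    (P : Fin k → Fin k → Bool) (hP : IsPermMatrix P) :
    n ^ 2 - k * (k - 1) ≤ mMin n n P ∧
    (mMin n n P = n ^ 2 - k * (k - 1) ↔
      (P = fun (i j : Fin k) => decide (i = j)) ∨
      (P = fun (i j : Fin k) => decide ((i : ℕ) + (j : ℕ) = k - 1))) := by
  obtain ⟨σ, hPσ⟩ := hP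
  have hmin : mMin n n P = onesCount (Aopt n k σ) := mMin_eq hPσ
  have hoz := ones_add_zeros (Aopt n k σ)
  have hzs := zeros_aopt_sum (n := n) σ
  have hrow := fun i : Fin n => rowBound σ i hk hn
  have hZle : zerosCount (Aopt n k σ) ≤ k * (k - 1) := by
    rw [hzs, ← sum_bnd hk hn]
    exact Finset.sum_le_sum fun i _ => (hrow i).1
  have hkn : k * (k - 1) ≤ n * n :=
    Nat.mul_le_mul (by omega) (by omega)
  have hnn : (n : ℕ) ^ 2 = n * n := sq n
  constructor
  · omega
  constructor
  · -- equality implies P is I or H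
    intro hmeq
    have hZeq : zerosCount (Aopt n k σ) = k * (k - 1) := by omega
    rcases Nat.lt_or_ge k 2 with hk1 | hk2
    · -- k = 1 : P is trivially the identity matrix
      left
      funext i j
      have hi := i.isLt
      have hj := j.isLt
      have hs := (σ i).isLt
      have h1 : i = j := Fin.ext (by omega)
      have h2 : σ i = j := Fin.ext (by omega)
      rw [hPσ]
      exact decide_eq_decide.mpr ⟨fun _ => h1, fun _ => h2⟩
    · -- k ≥ 2
      have hall : ∀ i : Fin n, zrow n k σ i = bnd n k (i : ℕ) := by
        have hsum : ∑ i : Fin n, zrow n k σ i = ∑ i : Fin n, bnd n k (i : ℕ) := by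
          rw [← hzs, hZeq, sum_bnd hk hn]
        exact fun i => (Finset.sum_eq_sum_iff_of_le (fun i _ => (hrow i).1)).mp hsum i
          (Finset.mem_univ i)
      have hI : IntervalHyp n k σ := fun i => (hrow i).2 (hall i)
      rcases sigma_zero hk2 hn hI with h0 | h0
      · left
        have hid := sigma_id hk2 hn hI h0
        funext i j
        rw [hPσ]
        have hiff : σ i = j ↔ i = j := by
          rw [Fin.ext_iff, Fin.ext_iff, hid i]
        exact decide_eq_decide.mpr hiff
      · right
        have hrev := sigma_rev hk2 hn hI h0
        funext i j
        rw [hPσ]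
        have hi := i.isLt
        have hj := j.isLt
        have hiff : σ i = j ↔ (i : ℕ) + (j : ℕ) = k - 1 := by
          rw [Fin.ext_iff, hrev i]
          omega
        exact decide_eq_decide.mpr hiff
  · -- P = I or H implies equality
    intro hPor
    have hZeq : zerosCount (Aopt n k σ) = k * (k - 1) := by
      rcases hPor with hPI | hPH
      · have hid : ∀ y : Fin k, σ y = y := by
          intro y
          have h5 := congrFun (congrFun hPI y) y
          rw [hPσ, decide_eq_decide] at h5
          exact h5.mpr rfl
        rw [hzs, ← sum_bnd hk hn]
        exact Finset.sum_congr rfl fun i _ => zrow_id hk hn hid i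
      · have hrev : ∀ y : Fin k, ((σ y : Fin k) : ℕ) = k - 1 - (y : ℕ) := by
          intro y
          have hy := y.isLt
          have hlt : k - 1 - (y : ℕ) < k := by omega
          have h5 := congrFun (congrFun hPH y) ⟨k - 1 - (y : ℕ), hlt⟩
          rw [hPσ, decide_eq_decide] at h5
          have hσy : σ y = ⟨k - 1 - (y : ℕ), hlt⟩ :=
            h5.mpr (by simp only [Fin.val_mk]; omega)
          rw [hσy]
        rw [hzs, ← sum_bnd hk hn]
        exact Finset.sum_congr rfl fun i _ => zrow_rev hk hn hrev i
    omega
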